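/- Let n ≥ 2 and ζ = exp(2πi/n). Consider the commutative ℂ-algebra A with basis {1} ∪ {u_l^q : 0 ≤ l,q ≤ n-1} where 1 is the identity, u_{l}^{q} · u_{l'}^{q'} = δ_{ll'}δ_{qq'} u_l^q when (l,l') ≠ (0,0), and u_0^q · u_0^{q'} = 0. Define Adams operations ψ^k on A that fix 1, send u_0^q ↦ k·u_0^q, and for l ≠ 0 send u_l^q ↦ Σ_{s: ks ≡ l mod n} u_s^q (the sum over solutions s in {0,...,n-1}, zero if no solution). Then an element L = α·1 + Σ_{l,q} β_l^q u_l^q is invertible and satisfies L^k = ψ^k(L) for all k ≥ 1 if and only if α = 1, and there exist f_0,...,f_{n-1} ∈ ℤ/nℤ with β_l^q = ζ^{l·f_q} - 1 for all l ≠ 0, with β_0^q ∈ ℂ arbitrary. -/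

import Mathlib

open Finset

lemma umul {n : ℕ} (hn : 2 ≤ n) {A : Type*} [CommRing A]
    (u : Fin n → Fin n → A)
    (hmul : ∀ (l q l' q' : Fin n), (l.1 ≠ 0 ∨ l'.1 ≠ 0) →
      u l q * u l' q' = if l = l' ∧ q = q' then u l q else 0)
    (h0 : ∀ q q' : Fin n, u ⟨0, Nat.lt_of_lt_of_le (Nat.succ_pos 1) hn⟩ q * u ⟨0, Nat.lt_of_lt_of_le (Nat.succ_pos 1) hn⟩ q' = 0) :
    ∀ l q l' q', u l q * u l' q' =
      if l = l' ∧ q = q' ∧ l.1 ≠ 0 then u l q else 0 := by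
  intro l q l' q'
  by_cases h : l.1 ≠ 0 ∨ l'.1 ≠ 0
  · rw [hmul l q l' q' h]
    by_cases h1 : l = l' ∧ q = q'
    · obtain ⟨rfl, rfl⟩ := h1
      have h2 : l.1 ≠ 0 := by tauto
      simp [h2]
    · simp only [if_neg h1]
      rw [if_neg (by tauto)]
  · push_neg at h
    obtain ⟨h1, h2⟩ := h
    have e1 : l = ⟨0, by omega⟩ := Fin.ext h1
    have e2 : l' = ⟨0, by omega⟩ := Fin.ext h2
    rw [e1, e2, h0]
    rw [if_neg (by simp [h1])]

lemma combo_mul {n : ℕ} (hn : 2 ≤ n) {A : Type*} [CommRing A] [Algebra ℂ A]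
    (u : Fin n → Fin n → A)
    (hu : ∀ l q l' q', u l q * u l' q' =
      if l = l' ∧ q = q' ∧ l.1 ≠ 0 then u l q else 0)
    (a a' : ℂ) (c c' : Fin n → Fin n → ℂ) :
    (a • (1:A) + ∑ l : Fin n, ∑ q : Fin n, c l q • u l q) *
      (a' • (1:A) + ∑ l : Fin n, ∑ q : Fin n, c' l q • u l q)
    = (a * a') • (1:A) + ∑ l : Fin n, ∑ q : Fin n,
        (a * c' l q + a' * c l q +
          (if l.1 = 0 then 0 else c l q * c' l q)) • u l q := by
  have key : ∀ (l q : Fin n), (∑ l' : Fin n, ∑ q' : Fin n,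
      (if l = l' ∧ q = q' ∧ l.1 ≠ 0 then (c l q * c' l' q') • u l q else 0))
      = (if l.1 = 0 then 0 else c l q * c' l q) • u l q := by
    intro l q
    rw [Finset.sum_eq_single l]
    · rw [Finset.sum_eq_single q]
      · by_cases P : l.1 = 0 <;> simp [P]
      · intro b _ hb; rw [if_neg (fun h => hb h.2.1.symm)]
      · simp
    · intro b _ hb
      exact Finset.sum_eq_zero (fun q' _ => if_neg (fun h => hb h.1.symm))
    · simp
  have e1 : (a • (1:A)) * (∑ l : Fin n, ∑ q : Fin n, c' l q • u l q)
      = ∑ l : Fin n, ∑ q : Fin n, (a * c' l q) • u l q := by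
    rw [Finset.mul_sum]
    refine Finset.sum_congr rfl (fun l _ => ?_)
    rw [Finset.mul_sum]
    refine Finset.sum_congr rfl (fun q _ => ?_)
    rw [smul_mul_smul_comm, one_mul]
  have e2 : (∑ l : Fin n, ∑ q : Fin n, c l q • u l q) * (a' • (1:A))
      = ∑ l : Fin n, ∑ q : Fin n, (a' * c l q) • u l q := by
    rw [Finset.sum_mul]
    refine Finset.sum_congr rfl (fun l _ => ?_)
    rw [Finset.sum_mul]
    refine Finset.sum_congr rfl (fun q _ => ?_)
    rw [smul_mul_smul_comm, mul_one, mul_comm]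
  have e3 : (∑ l : Fin n, ∑ q : Fin n, c l q • u l q) *
      (∑ l : Fin n, ∑ q : Fin n, c' l q • u l q)
      = ∑ l : Fin n, ∑ q : Fin n, (if l.1 = 0 then 0 else c l q * c' l q) • u l q := by
    rw [Finset.sum_mul]
    refine Finset.sum_congr rfl (fun l _ => ?_)
    rw [Finset.sum_mul]
    refine Finset.sum_congr rfl (fun q _ => ?_)
    rw [← key l q, Finset.mul_sum]
    refine Finset.sum_congr rfl (fun l' _ => ?_)
    rw [Finset.mul_sum]
    refine Finset.sum_congr rfl (fun q' _ => ?_)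
    rw [smul_mul_smul_comm, hu, smul_ite, smul_zero]
  rw [add_mul, mul_add, mul_add, smul_mul_smul_comm, mul_one, e1, e2, e3]
  have e4 : ∀ (l q : Fin n), (a * c' l q + a' * c l q +
      (if l.1 = 0 then 0 else c l q * c' l q)) • u l q
      = (a * c' l q) • u l q + (a' * c l q) • u l q +
        (if l.1 = 0 then 0 else c l q * c' l q) • u l q := by
    intro l q; rw [add_smul, add_smul]
  simp only [e4, Finset.sum_add_distrib]
  ring_nf

lemma coeffs_eq {n : ℕ} {A : Type*} [CommRing A] [Algebra ℂ A]
    (u : Fin n → Fin n → A)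
    (hind : LinearIndependent ℂ
      (fun p : Option (Fin n × Fin n) => p.elim (1 : A) (fun lq => u lq.1 lq.2)))
    (a a' : ℂ) (c c' : Fin n → Fin n → ℂ)
    (h : a • (1:A) + ∑ l : Fin n, ∑ q : Fin n, c l q • u l q
       = a' • (1:A) + ∑ l : Fin n, ∑ q : Fin n, c' l q • u l q) :
    a = a' ∧ ∀ l q, c l q = c' l q := by
  rw [Fintype.linearIndependent_iff] at hind
  have key := hind (fun p => p.elim (a - a')
      (fun lq => c lq.1 lq.2 - c' lq.1 lq.2)) ?_
  · refine ⟨sub_eq_zero.mp (key none), fun l q => sub_eq_zero.mp (key (some (l, q)))⟩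
  · rw [Fintype.sum_option]
    simp only [Option.elim, Fintype.sum_prod_type, sub_smul]
    simp only [Finset.sum_sub_distrib]
    rw [sub_add_sub_comm, sub_eq_zero, h]

lemma exists_repr {n : ℕ} {A : Type*} [CommRing A] [Algebra ℂ A]
    (u : Fin n → Fin n → A)
    (hspan : ⊤ ≤ Submodule.span ℂ
      (Set.range (fun p : Option (Fin n × Fin n) => p.elim (1 : A) (fun lq => u lq.1 lq.2))))
    (x : A) : ∃ (a : ℂ) (c : Fin n → Fin n → ℂ),
      x = a • (1:A) + ∑ l : Fin n, ∑ q : Fin n, c l q • u l q := by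
  have hx : x ∈ Submodule.span ℂ (Set.range
      (fun p : Option (Fin n × Fin n) => p.elim (1 : A) (fun lq => u lq.1 lq.2))) :=
    hspan trivial
  rw [Submodule.mem_span_range_iff_exists_fun] at hx
  obtain ⟨g, hg⟩ := hx
  refine ⟨g none, fun l q => g (some (l, q)), ?_⟩
  rw [← hg, Fintype.sum_option]
  simp only [Option.elim, Fintype.sum_prod_type]

lemma psi_formula {n : ℕ} (hn : 2 ≤ n) {A : Type*} [CommRing A] [Algebra ℂ A]
    (u : Fin n → Fin n → A) (ψ : ℕ → (A →ₗ[ℂ] A))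
    (hψ1 : ∀ k, ψ k 1 = 1)
    (hψ0 : ∀ k, ∀ q : Fin n, ψ k (u ⟨0, Nat.lt_of_lt_of_le (Nat.succ_pos 1) hn⟩ q) = (k : ℂ) • u ⟨0, Nat.lt_of_lt_of_le (Nat.succ_pos 1) hn⟩ q)
    (hψl : ∀ k, ∀ l q : Fin n, l.1 ≠ 0 →
      ψ k (u l q) = ∑ s ∈ Finset.univ.filter (fun s : Fin n => k * s.1 % n = l.1), u s q)
    (α : ℂ) (β : Fin n → Fin n → ℂ) (k : ℕ) :
    ψ k (α • (1:A) + ∑ l : Fin n, ∑ q : Fin n, β l q • u l q)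
    = α • (1:A) + ∑ l : Fin n, ∑ q : Fin n,
        (if l.1 = 0 then (k:ℂ) * β l q
         else if (k * l.1) % n = 0 then 0
         else β ⟨(k * l.1) % n, Nat.mod_lt _ (Nat.lt_of_lt_of_le (Nat.succ_pos 1) hn)⟩ q) • u l q := by
  have hz : (0:ℕ) < n := by omega
  set z : Fin n := ⟨0, hz⟩ with hzdef
  set T : Fin n → Fin n := fun s => ⟨(k * s.1) % n, Nat.mod_lt _ hz⟩ with hTdef
  rw [map_add, map_smul, hψ1, map_sum]
  congr 1
  simp only [map_sum, map_smul]
  rw [Finset.sum_comm]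
  conv_rhs => rw [Finset.sum_comm]
  refine Finset.sum_congr rfl (fun q _ => ?_)
  have hψ0' : ψ k (u z q) = (k:ℂ) • u z q := hψ0 k q
  calc ∑ l : Fin n, β l q • ψ k (u l q)
      = β z q • ψ k (u z q) + ∑ l ∈ Finset.univ.erase z, β l q • ψ k (u l q) :=
        (Finset.add_sum_erase _ _ (Finset.mem_univ z)).symm
    _ = ((k:ℂ) * β z q) • u z q +
        ∑ s : Fin n, (if (k * s.1) % n = 0 then 0 else β (T s) q • u s q) := by
        congr 1
        · rw [hψ0', smul_smul, mul_comm]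
        · calc ∑ l ∈ Finset.univ.erase z, β l q • ψ k (u l q)
              = ∑ l ∈ Finset.univ.erase z, ∑ s : Fin n,
                  (if (k * s.1) % n = l.1 then β l q • u s q else 0) := by
                refine Finset.sum_congr rfl (fun l hl => ?_)
                have hl0 : l.1 ≠ 0 := fun h => (Finset.ne_of_mem_erase hl) (Fin.ext h)
                rw [hψl k l q hl0, Finset.smul_sum, Finset.sum_filter]
            _ = ∑ s : Fin n, ∑ l ∈ Finset.univ.erase z,
                  (if (k * s.1) % n = l.1 then β l q • u s q else 0) := Finset.sum_comm
            _ = ∑ s : Fin n, (if (k * s.1) % n = 0 then 0 else β (T s) q • u s q) := by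
                refine Finset.sum_congr rfl (fun s _ => ?_)
                have hcond : ∀ l : Fin n, ((k * s.1) % n = l.1) = (l = T s) := by
                  intro l
                  simp only [eq_iff_iff, Fin.ext_iff, hTdef]
                  exact ⟨fun h => h.symm, fun h => h.symm⟩
                simp only [hcond]
                rw [Finset.sum_ite_eq' (Finset.univ.erase z) (T s) (fun l => β l q • u s q)]
                by_cases hs : (k * s.1) % n = 0
                · rw [if_pos hs, if_neg]
                  simp only [Finset.mem_erase, Finset.mem_univ, and_true, not_not]
                  exact Fin.ext hs
                · rw [if_neg hs, if_pos]
                  simp only [Finset.mem_erase, Finset.mem_univ, and_true]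
                  exact fun h => hs (by simpa [Fin.ext_iff, hTdef] using h)
    _ = ∑ s : Fin n, (if s.1 = 0 then (k:ℂ) * β s q
          else if (k * s.1) % n = 0 then 0 else β (T s) q) • u s q := by
        have step : ∀ s : Fin n, (if s.1 = 0 then (k:ℂ) * β s q
            else if (k * s.1) % n = 0 then 0 else β (T s) q) • u s q
            = (if s = z then ((k:ℂ) * β z q) • u z q else 0) +
              (if (k * s.1) % n = 0 then 0 else β (T s) q • u s q) := by
          intro s
          by_cases hs : s = z
          · subst hs
            have : (k * z.1) % n = 0 := by simp [hzdef]
            have hz0 : z.1 = 0 := rfl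
            simp [this, hz0]
          · have hs0 : s.1 ≠ 0 := fun h => hs (Fin.ext h)
            rw [if_neg hs0, if_neg hs, zero_add, ite_smul, zero_smul]
        simp only [step, Finset.sum_add_distrib]
        rw [Finset.sum_ite_eq' Finset.univ z
          (fun _ => ((k:ℂ) * β z q) • u z q), if_pos (Finset.mem_univ z)]

lemma pow_formula {n : ℕ} (hn : 2 ≤ n) {A : Type*} [CommRing A] [Algebra ℂ A]
    (u : Fin n → Fin n → A)
    (hu : ∀ l q l' q', u l q * u l' q' =
      if l = l' ∧ q = q' ∧ l.1 ≠ 0 then u l q else 0)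
    (α : ℂ) (β : Fin n → Fin n → ℂ) :
    ∀ k : ℕ, (α • (1:A) + ∑ l : Fin n, ∑ q : Fin n, β l q • u l q) ^ k
      = (α ^ k) • (1:A) + ∑ l : Fin n, ∑ q : Fin n,
          (if l.1 = 0 then (k:ℂ) * α ^ (k-1) * β l q
           else (α + β l q) ^ k - α ^ k) • u l q := by
  intro k
  induction k with
  | zero =>
      simp
  | succ k ih =>
      rw [pow_succ, ih, combo_mul hn u hu, ← pow_succ]
      congr 1
      refine Finset.sum_congr rfl (fun l _ => Finset.sum_congr rfl (fun q _ => ?_))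
      by_cases hl : l.1 = 0
      · rw [if_pos hl]
        simp only [if_pos hl, add_zero]
        cases k with
        | zero => push_cast; ring_nf
        | succ m =>
            simp only [Nat.add_sub_cancel]
            push_cast
            ring
      · rw [if_neg hl]
        simp only [if_neg hl]
        ring

theorem stmt12 (n : ℕ) (hn : 2 ≤ n) (ζ : ℂ)
    (hζ : ζ = Complex.exp (2 * Real.pi * Complex.I / n))
    (A : Type*) [CommRing A] [Algebra ℂ A]
    (u : Fin n → Fin n → A)
    (hmul : ∀ (l q l' q' : Fin n), (l.1 ≠ 0 ∨ l'.1 ≠ 0) →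
      u l q * u l' q' = if l = l' ∧ q = q' then u l q else 0)
    (h0 : ∀ q q' : Fin n, u ⟨0, by omega⟩ q * u ⟨0, by omega⟩ q' = 0)
    (hind : LinearIndependent ℂ
      (fun p : Option (Fin n × Fin n) => p.elim (1 : A) (fun lq => u lq.1 lq.2)))
    (hspan : ⊤ ≤ Submodule.span ℂ
      (Set.range (fun p : Option (Fin n × Fin n) => p.elim (1 : A) (fun lq => u lq.1 lq.2))))
    (ψ : ℕ → (A →ₗ[ℂ] A))
    (hψ1 : ∀ k, ψ k 1 = 1)
    (hψ0 : ∀ k, ∀ q : Fin n, ψ k (u ⟨0, by omega⟩ q) = (k : ℂ) • u ⟨0, by omega⟩ q)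
    (hψl : ∀ k, ∀ l q : Fin n, l.1 ≠ 0 →
      ψ k (u l q) = ∑ s ∈ Finset.univ.filter (fun s : Fin n => k * s.1 % n = l.1), u s q)
    (α : ℂ) (β : Fin n → Fin n → ℂ) (L : A)
    (hL : L = α • (1 : A) + ∑ l : Fin n, ∑ q : Fin n, β l q • u l q) :
    (IsUnit L ∧ ∀ k : ℕ, 1 ≤ k → L ^ k = ψ k L) ↔
      (α = 1 ∧ ∃ f : Fin n → ZMod n,
        ∀ q l : Fin n, l.1 ≠ 0 → β l q = ζ ^ (l.1 * (f q).val) - 1) := by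
  haveI : NeZero n := ⟨by omega⟩
  have hu := umul hn u hmul h0
  have hprim : IsPrimitiveRoot ζ n := hζ ▸ Complex.isPrimitiveRoot_exp n (by omega)
  have hζn : ζ ^ n = 1 := hprim.pow_eq_one
  have hpowmod : ∀ (x : ℂ), x ^ n = 1 → ∀ a : ℕ, x ^ a = x ^ (a % n) := by
    intro x hx a
    conv_lhs => rw [← Nat.div_add_mod a n]
    rw [pow_add, pow_mul, hx, one_pow, one_mul]
  have hLpow : ∀ k : ℕ, L ^ k = (α ^ k) • (1:A) + ∑ l : Fin n, ∑ q : Fin n,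
      (if l.1 = 0 then (k:ℂ) * α ^ (k-1) * β l q
       else (α + β l q) ^ k - α ^ k) • u l q := by
    intro k; rw [hL]; exact pow_formula hn u hu α β k
  have hψL : ∀ k : ℕ, ψ k L = α • (1:A) + ∑ l : Fin n, ∑ q : Fin n,
      (if l.1 = 0 then (k:ℂ) * β l q
       else if (k * l.1) % n = 0 then 0
       else β ⟨(k * l.1) % n, Nat.mod_lt _ (by omega)⟩ q) • u l q := by
    intro k; rw [hL]; exact psi_formula hn u ψ hψ1 hψ0 hψl α β k
  constructor
  · rintro ⟨hU, hEq⟩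
    have key : ∀ k : ℕ, 1 ≤ k → (α ^ k = α ∧ ∀ l q : Fin n,
        (if l.1 = 0 then (k:ℂ) * α ^ (k-1) * β l q
         else (α + β l q) ^ k - α ^ k)
        = (if l.1 = 0 then (k:ℂ) * β l q
           else if (k * l.1) % n = 0 then 0
           else β ⟨(k * l.1) % n, Nat.mod_lt _ (by omega)⟩ q)) := by
      intro k hk
      exact coeffs_eq u hind _ _ _ _ (by rw [← hLpow, ← hψL]; exact hEq k hk)
    -- α ≠ 0 from invertibility
    have hαne : α ≠ 0 := by
      obtain ⟨v, hv⟩ := hU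
      have hvinv : L * ↑v⁻¹ = 1 := by rw [← hv]; exact v.mul_inv
      obtain ⟨a, c, hM⟩ := exists_repr u hspan (↑v⁻¹ : A)
      have hcomb : (α * a) • (1:A) + ∑ l : Fin n, ∑ q : Fin n,
          (α * c l q + a * β l q + (if l.1 = 0 then 0 else β l q * c l q)) • u l q
          = (1:ℂ) • (1:A) + ∑ l : Fin n, ∑ q : Fin n, (0:ℂ) • u l q := by
        rw [← combo_mul hn u hu, ← hL, ← hM, hvinv]
        simp
      exact left_ne_zero_of_mul_eq_one (coeffs_eq u hind _ _ _ _ hcomb).1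
    have hα : α = 1 := by
      have h2 := (key 2 (by omega)).1
      have hprod : α * (α - 1) = 0 := by linear_combination h2
      rcases mul_eq_zero.mp hprod with h | h
      · exact absurd h hαne
      · exact sub_eq_zero.mp h
    subst hα
    refine ⟨rfl, ?_⟩
    set one : Fin n := ⟨1, by omega⟩ with hone
    have main : ∀ q : Fin n, ∃ fq : ZMod n, ∀ l : Fin n, l.1 ≠ 0 →
        β l q = ζ ^ (l.1 * fq.val) - 1 := by
      intro q
      have hγn : (1 + β one q) ^ n = 1 := by
        have h := (key n (by omega)).2 one q
        rw [if_neg (by simp [hone]), if_neg (by simp [hone]),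
          if_pos (by simp [hone]), one_pow] at h
        exact sub_eq_zero.mp h
      obtain ⟨m, hm, hmq⟩ := hprim.eq_pow_of_pow_eq_one hγn
      refine ⟨(m : ZMod n), fun l hl => ?_⟩
      have hval : ((m : ZMod n)).val = m := ZMod.val_natCast_of_lt hm
      have hk := (key l.1 (by omega)).2 one q
      rw [if_neg (by simp [hone]), if_neg (by simp [hone])] at hk
      have hmod : (l.1 * one.1) % n = l.1 := by
        simp [hone, Nat.mod_eq_of_lt l.isLt]
      rw [if_neg (by rw [hmod]; exact hl)] at hk
      have hfin : (⟨(l.1 * one.1) % n, Nat.mod_lt _ (by omega)⟩ : Fin n) = l :=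
        Fin.ext hmod
      rw [hfin] at hk
      rw [hval, ← hk, one_pow, ← hmq, ← pow_mul, mul_comm m l.1]
    choose f hf using main
    exact ⟨f, fun q l hl => hf q l hl⟩
  · rintro ⟨hα, f, hf⟩
    subst hα
    have hζne : ζ ≠ 0 := by rw [hζ]; exact Complex.exp_ne_zero _
    have hγ : ∀ l q : Fin n, l.1 ≠ 0 → 1 + β l q = (ζ ^ (f q).val) ^ l.1 := by
      intro l q hl
      rw [hf q l hl, ← pow_mul, mul_comm (f q).val l.1]
      ring
    have hne : ∀ l q : Fin n, l.1 ≠ 0 → 1 + β l q ≠ 0 := by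
      intro l q hl
      rw [hγ l q hl]
      exact pow_ne_zero _ (pow_ne_zero _ hζne)
    have hxq : ∀ q : Fin n, (ζ ^ (f q).val) ^ n = 1 := by
      intro q
      rw [← pow_mul, mul_comm, pow_mul, hζn, one_pow]
    constructor
    · -- invertibility
      set c : Fin n → Fin n → ℂ :=
        fun l q => if l.1 = 0 then -β l q else (1 + β l q)⁻¹ - 1 with hc
      have hLM : L * ((1:ℂ) • (1:A) + ∑ l : Fin n, ∑ q : Fin n, c l q • u l q) = 1 := by
        rw [hL, combo_mul hn u hu]
        have : ∀ l q : Fin n, ((1:ℂ) * c l q + 1 * β l q +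
            (if l.1 = 0 then 0 else β l q * c l q)) = 0 := by
          intro l q
          by_cases hl : l.1 = 0
          · simp only [hc, if_pos hl]
            ring
          · have h1 := hne l q hl
            simp only [hc, if_neg hl, one_mul]
            field_simp
            ring
        simp only [this]
        simp
      exact IsUnit.of_mul_eq_one _ hLM
    · intro k hk
      rw [hLpow k, hψL k]
      congr 1
      · rw [one_pow]
      refine Finset.sum_congr rfl (fun l _ => Finset.sum_congr rfl (fun q _ => ?_))
      by_cases hl : l.1 = 0
      · rw [if_pos hl, if_pos hl, one_pow, mul_one]
      · rw [if_neg hl, if_neg hl]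
        have hred : (1 + β l q) ^ k = (ζ ^ (f q).val) ^ ((k * l.1) % n) := by
          rw [hγ l q hl, ← pow_mul, mul_comm l.1 k, hpowmod _ (hxq q)]
        rw [one_pow, hred]
        by_cases hm : (k * l.1) % n = 0
        · rw [if_pos hm, hm, pow_zero, sub_self]
        · rw [if_neg hm, hf q ⟨(k * l.1) % n, Nat.mod_lt _ (by omega)⟩ hm]
          rw [mul_comm ((⟨(k * l.1) % n, Nat.mod_lt _ (by omega)⟩ : Fin n) : ℕ) (f q).val, pow_mul]
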